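/- Let Q be a finite group whose order is a power of 2. Then every group homomorphism φ : Sp(4,ℤ) → Q has image of cardinality at most 2. In particular, the only nontrivial finite 2-group onto which Sp(4,ℤ) surjects is ℤ/2ℤ. -/

import Mathlib

open Matrix
namespace Sp4Aux
set_option maxHeartbeats 1000000
abbrev Idx := (Fin 2) ⊕ (Fin 2)
abbrev Mat := Matrix Idx Idx ℤ
abbrev vec := Idx → ℤ
abbrev SpG := Matrix.symplecticGroup (Fin 2) ℤ
abbrev Jm : Mat := Matrix.J (Fin 2) ℤ

def V (a b c d : ℤ) : vec := Sum.elim ![a, b] ![c, d]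
@[simp] lemma V_inl0 (a b c d : ℤ) : V a b c d (Sum.inl 0) = a := rfl
@[simp] lemma V_inl1 (a b c d : ℤ) : V a b c d (Sum.inl 1) = b := rfl
@[simp] lemma V_inr0 (a b c d : ℤ) : V a b c d (Sum.inr 0) = c := rfl
@[simp] lemma V_inr1 (a b c d : ℤ) : V a b c d (Sum.inr 1) = d := rfl

lemma vec_eq_V (x : vec) :
    x = V (x (Sum.inl 0)) (x (Sum.inl 1)) (x (Sum.inr 0)) (x (Sum.inr 1)) := by
  funext i; rcases i with i | i <;> fin_cases i <;> rfl

@[simp] lemma Jm_inl_inl (i j : Fin 2) : Jm (Sum.inl i) (Sum.inl j) = 0 := rfl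
@[simp] lemma Jm_inr_inr (i j : Fin 2) : Jm (Sum.inr i) (Sum.inr j) = 0 := rfl
@[simp] lemma Jm_inl_inr (i j : Fin 2) : Jm (Sum.inl i) (Sum.inr j) = if i = j then -1 else 0 := by
  rcases eq_or_ne i j with h | h <;> simp [Matrix.J, Matrix.fromBlocks, Matrix.one_apply, h]
@[simp] lemma Jm_inr_inl (i j : Fin 2) : Jm (Sum.inr i) (Sum.inl j) = if i = j then 1 else 0 := by
  rcases eq_or_ne i j with h | h <;> simp [Matrix.J, Matrix.fromBlocks, Matrix.one_apply, h]

lemma Jm_mulVec (x : vec) :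
    Jm.mulVec x = V (-(x (Sum.inr 0))) (-(x (Sum.inr 1))) (x (Sum.inl 0)) (x (Sum.inl 1)) := by
  funext i; rcases i with i | i <;> fin_cases i <;>
    simp [Matrix.mulVec, dotProduct, Fintype.sum_sum_type, Fin.sum_univ_two]

noncomputable def pair (u w : vec) : ℤ := u ⬝ᵥ Jm.mulVec w

lemma pair_V (a b c d a' b' c' d' : ℤ) :
    pair (V a b c d) (V a' b' c' d') = -(a * c') - b * d' + c * a' + d * b' := by
  simp [pair, Jm_mulVec, dotProduct, Fintype.sum_sum_type, Fin.sum_univ_two]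
  ring

def T (v : vec) (lam : ℤ) : Mat :=
  Matrix.of fun i j => (if i = j then 1 else 0) + lam * (v i * (Jm.mulVec v) j)

lemma T_apply (v : vec) (lam : ℤ) (i j : Idx) :
    T v lam i j = (if i = j then 1 else 0) + lam * (v i * (Jm.mulVec v) j) := rfl

lemma T_mem (v : vec) (lam : ℤ) : T v lam ∈ SpG := by
  rw [SymplecticGroup.mem_iff']
  ext i j
  rcases i with i | i <;> rcases j with j | j <;> fin_cases i <;> fin_cases j <;>
    simp only [Matrix.mul_apply, Matrix.transpose_apply, Fintype.sum_sum_type, Fin.sum_univ_two,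
      T_apply, Jm_mulVec, V_inl0, V_inl1, V_inr0, V_inr1, Jm_inl_inl, Jm_inl_inr, Jm_inr_inl,
      Jm_inr_inr, Sum.inl.injEq, Sum.inr.injEq, reduceCtorEq, if_true, if_false, reduceIte,
      Fin.isValue] <;>
    ring_nf <;>
    simp [Fin.ext_iff] <;> ring


lemma pair_expand (x v : vec) :
    pair x v = -(x (Sum.inl 0) * v (Sum.inr 0)) - x (Sum.inl 1) * v (Sum.inr 1)
      + x (Sum.inr 0) * v (Sum.inl 0) + x (Sum.inr 1) * v (Sum.inl 1) := by
  simp [pair, Jm_mulVec, dotProduct, Fintype.sum_sum_type, Fin.sum_univ_two]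
  ring

lemma T_mulVec (v : vec) (lam : ℤ) (x : vec) :
    (T v lam).mulVec x = x + (lam * pair x v) • v := by
  funext i
  rcases i with i | i <;> fin_cases i <;>
    simp only [Matrix.mulVec, dotProduct, Fintype.sum_sum_type, Fin.sum_univ_two, T_apply,
      Jm_mulVec, pair_expand, Pi.add_apply, Pi.smul_apply, smul_eq_mul, Sum.elim_inl,
      Sum.elim_inr, Matrix.cons_val_zero, Matrix.cons_val_one, Matrix.head_cons,
      Sum.inl.injEq, Sum.inr.injEq, reduceCtorEq, Fin.isValue] <;>
    simp [Fin.ext_iff] <;> ring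

lemma T_zero (v : vec) : T v 0 = 1 := by
  ext i j; simp [T_apply, Matrix.one_apply]

lemma T_add (v : vec) (lam mu : ℤ) : T v lam * T v mu = T v (lam + mu) := by
  ext i j
  rcases i with i | i <;> rcases j with j | j <;> fin_cases i <;> fin_cases j <;>
    simp only [Matrix.mul_apply, Fintype.sum_sum_type, Fin.sum_univ_two, T_apply,
      Jm_mulVec, Sum.elim_inl, Sum.elim_inr, Matrix.cons_val_zero, Matrix.cons_val_one,
      Matrix.head_cons, Sum.inl.injEq, Sum.inr.injEq, reduceCtorEq, Fin.isValue] <;>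
    simp [Fin.ext_iff] <;> ring

lemma T_smul (v : vec) (m lam : ℤ) : T (m • v) lam = T v (m * m * lam) := by
  ext i j
  rcases i with i | i <;> rcases j with j | j <;> fin_cases i <;> fin_cases j <;>
    simp only [T_apply, Jm_mulVec, Pi.smul_apply, smul_eq_mul, Sum.elim_inl, Sum.elim_inr,
      Matrix.cons_val_zero, Matrix.cons_val_one, Matrix.head_cons] <;>
    simp [Fin.ext_iff] <;> ring

lemma mat_ext {A B : Mat} (h : ∀ x : vec, A.mulVec x = B.mulVec x) : A = B := by
  ext i j
  have := congrFun (h (Pi.single j 1)) i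
  simpa [Matrix.mulVec_single] using this

lemma pair_invariance {P : Mat} (hP : P ∈ SpG) (x y : vec) :
    pair (P.mulVec x) (P.mulVec y) = pair x y := by
  have h := SymplecticGroup.mem_iff'.mp hP
  unfold pair
  rw [mulVec_mulVec, dotProduct_comm, dotProduct_mulVec, ← Matrix.mulVec_transpose,
    mulVec_mulVec, ← Matrix.mul_assoc, h, dotProduct_comm]

lemma T_conj {P : Mat} (hP : P ∈ SpG) (v : vec) (lam : ℤ) :
    P * T v lam = T (P.mulVec v) lam * P := by
  apply mat_ext; intro x
  rw [← mulVec_mulVec, ← mulVec_mulVec, T_mulVec, T_mulVec, Matrix.mulVec_add,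
    Matrix.mulVec_smul, pair_invariance hP]

-- Reach / Euclid layer (to be appended to core.lean)
def Tsp (v : vec) (lam : ℤ) : SpG := ⟨T v lam, T_mem v lam⟩

def S : Set SpG := { A | ∃ v lam, A = Tsp v lam }

def H : Subgroup SpG := Subgroup.closure S

lemma Tsp_mem_H (v : vec) (lam : ℤ) : Tsp v lam ∈ H :=
  Subgroup.subset_closure ⟨v, lam, rfl⟩

def Reach (F : Set vec) (v w : vec) : Prop :=
  ∃ P : SpG, P ∈ H ∧ (P : Mat).mulVec v = w ∧ ∀ f ∈ F, (P : Mat).mulVec f = f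

lemma Reach.refl' (F : Set vec) (v : vec) : Reach F v v :=
  ⟨1, one_mem _, by simp [Matrix.one_mulVec], fun f _ => by simp [Matrix.one_mulVec]⟩

lemma Reach.trans {F : Set vec} {v w z : vec} (h1 : Reach F v w) (h2 : Reach F w z) :
    Reach F v z := by
  obtain ⟨P1, hP1, hv1, hf1⟩ := h1
  obtain ⟨P2, hP2, hv2, hf2⟩ := h2
  refine ⟨P2 * P1, mul_mem hP2 hP1, ?_, fun f hf => ?_⟩
  · show ((P2 : Mat) * (P1 : Mat)).mulVec v = z
    rw [← mulVec_mulVec, hv1, hv2]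
  · show ((P2 : Mat) * (P1 : Mat)).mulVec f = f
    rw [← mulVec_mulVec, hf1 f hf, hf2 f hf]

lemma Reach.mono {F F' : Set vec} {v w : vec} (hsub : F' ⊆ F) (h : Reach F v w) :
    Reach F' v w := by
  obtain ⟨P, hP, hv, hf⟩ := h
  exact ⟨P, hP, hv, fun f hf' => hf f (hsub hf')⟩

lemma Reach.step (F : Set vec) (w0 : vec) (lam : ℤ) (v : vec)
    (hF : ∀ f ∈ F, pair f w0 = 0) :
    Reach F v (v + (lam * pair v w0) • w0) := by
  refine ⟨Tsp w0 lam, Tsp_mem_H _ _, T_mulVec _ _ _, fun f hf => ?_⟩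
  rw [show ((Tsp w0 lam : SpG) : Mat) = T w0 lam from rfl, T_mulVec, hF f hf]
  simp

lemma V_add_smul (a b c d k a' b' c' d' : ℤ) :
    V a b c d + k • V a' b' c' d' = V (a + k * a') (b + k * b') (c + k * c') (d + k * d') := by
  funext i; rcases i with i | i <;> fin_cases i <;> simp [V]

lemma stepV (F : Set vec) (a b c d a' b' c' d' lam : ℤ)
    (hF : ∀ f ∈ F, pair f (V a' b' c' d') = 0) :
    Reach F (V a b c d)
      (V (a + lam * (-(a * c') - b * d' + c * a' + d * b') * a')
         (b + lam * (-(a * c') - b * d' + c * a' + d * b') * b')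
         (c + lam * (-(a * c') - b * d' + c * a' + d * b') * c')
         (d + lam * (-(a * c') - b * d' + c * a' + d * b') * d')) := by
  have h := Reach.step F (V a' b' c' d') lam (V a b c d) hF
  rwa [pair_V, V_add_smul] at h

def E0 : vec := V 1 0 0 0
def E1 : vec := V 0 1 0 0
def E2 : vec := V 0 0 1 0
def E3 : vec := V 0 0 0 1

-- the four elementary steps used for euclidean moves
lemma step_E0 {F : Set vec} (hF : ∀ f ∈ F, pair f E0 = 0) (a b c d lam : ℤ) :
    Reach F (V a b c d) (V (a + lam * c) b c d) := by
  have h := stepV F a b c d 1 0 0 0 lam hF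
  convert h using 2 <;> ring

lemma step_E2 {F : Set vec} (hF : ∀ f ∈ F, pair f E2 = 0) (a b c d lam : ℤ) :
    Reach F (V a b c d) (V a b (c + lam * a) d) := by
  have h := stepV F a b c d 0 0 1 0 (-lam) hF
  convert h using 2 <;> ring

lemma step_E1 {F : Set vec} (hF : ∀ f ∈ F, pair f E1 = 0) (a b c d lam : ℤ) :
    Reach F (V a b c d) (V a (b + lam * d) c d) := by
  have h := stepV F a b c d 0 1 0 0 lam hF
  convert h using 2 <;> ring

lemma step_E3 {F : Set vec} (hF : ∀ f ∈ F, pair f E3 = 0) (a b c d lam : ℤ) :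
    Reach F (V a b c d) (V a b c (d + lam * b)) := by
  have h := stepV F a b c d 0 0 0 1 (-lam) hF
  convert h using 2 <;> ring

lemma step_E01 {F : Set vec} (hF : ∀ f ∈ F, pair f (V 1 1 0 0) = 0) (a b c d lam : ℤ) :
    Reach F (V a b c d) (V (a + lam * (c + d)) (b + lam * (c + d)) c d) := by
  have h := stepV F a b c d 1 1 0 0 lam hF
  convert h using 2 <;> ring

lemma step_E23 {F : Set vec} (hF : ∀ f ∈ F, pair f (V 0 0 1 1) = 0) (a b c d lam : ℤ) :
    Reach F (V a b c d) (V a b (c + lam * (-a - b)) (d + lam * (-a - b))) := by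
  have h := stepV F a b c d 0 0 1 1 lam hF
  convert h using 2 <;> ring

lemma step_E12 {F : Set vec} (hF : ∀ f ∈ F, pair f (V 0 1 1 0) = 0) (a b c d lam : ℤ) :
    Reach F (V a b c d) (V a (b + lam * (d - a)) (c + lam * (d - a)) d) := by
  have h := stepV F a b c d 0 1 1 0 lam hF
  convert h using 2 <;> ring

/-- abstract euclidean moves on pairs -/
inductive R : ℤ × ℤ → ℤ × ℤ → Prop
  | refl (p) : R p p
  | trans {p q r} : R p q → R q r → R p r
  | m1 (a c lam) : R (a, c) (a + lam * c, c)
  | m2 (a c lam) : R (a, c) (a, c + lam * a)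

lemma R_swap {p q : ℤ × ℤ} (h : R p q) : R (p.2, p.1) (q.2, q.1) := by
  induction h with
  | refl p => exact R.refl _
  | trans h1 h2 ih1 ih2 => exact R.trans ih1 ih2
  | m1 a c lam => exact R.m2 c a lam
  | m2 a c lam => exact R.m1 c a lam

lemma R_gcd (a c : ℤ) : ∃ g, R (a, c) (g, 0) ∧ g ∣ a ∧ g ∣ c := by
  generalize hn : c.natAbs = n
  induction n using Nat.strong_induction_on generalizing a c with
  | _ n ih =>
    rcases eq_or_ne c 0 with rfl | hc
    · exact ⟨a, R.refl _, dvd_refl a, dvd_zero a⟩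
    · have hlt : (a % c).natAbs < n := by
        rw [← hn]
        have h0 : 0 <= a % c := Int.emod_nonneg a hc
        have h1 : a % c < |c| := by
          rcases lt_or_gt_of_ne hc with h | h
          · have he : a % c = a % (-c) := by
              rw [show c = -(-c) by ring, Int.emod_neg, neg_neg]
            rw [he, abs_of_neg h]
            exact Int.emod_lt_of_pos a (by omega)
          · rw [abs_of_pos h]
            exact Int.emod_lt_of_pos a h
        rw [Int.abs_eq_natAbs] at h1
        omega
      obtain ⟨g, hR, hg1, hg2⟩ := ih _ hlt c (a % c) rfl
      have hstep : R (a, c) (a % c, c) := by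
        have := R.m1 a c (-(a / c))
        rwa [show a + -(a / c) * c = a % c by rw [Int.emod_def]; ring] at this
      have hswap : R (a % c, c) (0, g) := by
        have := R_swap hR
        simpa using this
      have hfin : R ((0 : ℤ), g) (g, 0) := by
        have h1 := R.m1 0 g 1
        rw [show (0 : ℤ) + 1 * g = g by ring] at h1
        have h2 := R.m2 g g (-1)
        rw [show g + (-1) * g = 0 by ring] at h2
        exact h1.trans h2
      refine ⟨g, (hstep.trans (hswap.trans hfin)), ?_, hg1⟩
      have : a = c * (a / c) + a % c := (Int.mul_ediv_add_emod a c).symm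
      rw [this]
      exact dvd_add (Dvd.dvd.mul_right hg1 _) hg2

lemma R_flip (a : ℤ) : R (a, 0) (-a, 0) := by
  have h1 := R.m2 a 0 1
  rw [show (0 : ℤ) + 1 * a = a by ring] at h1
  have h2 := R.m1 a a (-2)
  rw [show a + (-2) * a = -a by ring] at h2
  have h3 := R.m2 (-a) a 1
  rw [show a + 1 * (-a) = 0 by ring] at h3
  exact (h1.trans h2).trans h3

lemma R_coprime {a c : ℤ} (h : IsCoprime a c) : R (a, c) (1, 0) := by
  obtain ⟨g, hR, hg1, hg2⟩ := R_gcd a c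
  have hu : IsUnit g := h.isUnit_of_dvd' hg1 hg2
  rcases Int.isUnit_iff.mp hu with rfl | rfl
  · exact hR
  · have := R_flip (-1)
    rw [neg_neg] at this
    exact hR.trans this
-- pair values on basis vectors
lemma pair_E0_right (x : vec) : pair E0 x = -(x (Sum.inr 0)) := by
  rw [pair_expand]; simp [E0]
lemma pair_E1_right (x : vec) : pair E1 x = -(x (Sum.inr 1)) := by
  rw [pair_expand]; simp [E1]
lemma pair_E2_right (x : vec) : pair E2 x = x (Sum.inl 0) := by
  rw [pair_expand]; simp [E2]
lemma pair_E3_right (x : vec) : pair E3 x = x (Sum.inl 1) := by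
  rw [pair_expand]; simp [E3]

lemma pair_neg_right (x y : vec) : pair x (-y) = -(pair x y) := by
  simp [pair, Matrix.mulVec_neg, dotProduct_neg]

def F02 : Set vec := {E0, E2}

lemma L02 {p q : ℤ × ℤ} (h : R p q) (b d : ℤ) :
    Reach ∅ (V p.1 b p.2 d) (V q.1 b q.2 d) := by
  induction h with
  | refl p => exact Reach.refl' _ _
  | trans h1 h2 ih1 ih2 => exact ih1.trans ih2
  | m1 a c lam => exact step_E0 (fun f hf => absurd hf (Set.notMem_empty f)) a b c d lam
  | m2 a c lam => exact step_E2 (fun f hf => absurd hf (Set.notMem_empty f)) a b c d lam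

lemma L13 {p q : ℤ × ℤ} (h : R p q) (a c : ℤ) :
    Reach F02 (V a p.1 c p.2) (V a q.1 c q.2) := by
  have hF1 : ∀ f ∈ F02, pair f E1 = 0 := by
    intro f hf
    rcases hf with rfl | hf
    · rw [pair_E0_right]; simp [E1]
    · rw [Set.mem_singleton_iff] at hf; subst hf
      rw [pair_E2_right]; simp [E1]
  have hF3 : ∀ f ∈ F02, pair f E3 = 0 := by
    intro f hf
    rcases hf with rfl | hf
    · rw [pair_E0_right]; simp [E3]
    · rw [Set.mem_singleton_iff] at hf; subst hf
      rw [pair_E2_right]; simp [E3]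
  induction h with
  | refl p => exact Reach.refl' _ _
  | trans h1 h2 ih1 ih2 => exact ih1.trans ih2
  | m1 b dd lam => exact step_E1 hF1 a b c dd lam
  | m2 b dd lam => exact step_E3 hF3 a b c dd lam

lemma phase1 {a b c d : ℤ} (u : vec) (hu : pair (V a b c d) u = 1) :
    Reach ∅ (V a b c d) E0 := by
  have hemp : ∀ f ∈ (∅ : Set vec), pair f (V 0 0 1 1) = 0 :=
    fun f hf => absurd hf (Set.notMem_empty f)
  have hemp2 : ∀ f ∈ (∅ : Set vec), pair f (V 0 1 1 0) = 0 :=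
    fun f hf => absurd hf (Set.notMem_empty f)
  have hemp3 : ∀ f ∈ (∅ : Set vec), pair f E2 = 0 :=
    fun f hf => absurd hf (Set.notMem_empty f)
  obtain ⟨g, hR1, -, -⟩ := R_gcd a c
  have h1 : Reach ∅ (V a b c d) (V g b 0 d) := L02 hR1 b d
  obtain ⟨h, hR2, -, -⟩ := R_gcd b d
  have h2 : Reach ∅ (V g b 0 d) (V g h 0 0) :=
    (L13 hR2 g 0).mono (Set.empty_subset _)
  have h12 := h1.trans h2
  obtain ⟨P, hPH, hPv, -⟩ := h12
  have hpair : pair (V g h 0 0) ((P : Mat).mulVec u) = 1 := by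
    rw [← hPv, pair_invariance P.2, hu]
  have hcop : IsCoprime g h := by
    rw [pair_expand] at hpair
    simp only [V_inl0, V_inl1, V_inr0, V_inr1] at hpair
    exact ⟨-(((P : Mat).mulVec u) (Sum.inr 0)), -(((P : Mat).mulVec u) (Sum.inr 1)),
      by linear_combination hpair⟩
  have h12' : Reach ∅ (V a b c d) (V g h 0 0) := ⟨P, hPH, hPv, fun f hf => absurd hf (Set.notMem_empty f)⟩
  have h3 : Reach ∅ (V g h 0 0) (V g h (g + h) (g + h)) := by
    have hstep := step_E23 hemp g h 0 0 (-1)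
    convert hstep using 2 <;> ring
  have hcop2 : IsCoprime g (g + h) := by
    have := hcop.add_mul_left_right 1
    rwa [mul_one, add_comm h g] at this
  have h5 : Reach ∅ (V g h (g + h) (g + h)) (V 1 h 0 (g + h)) :=
    L02 (R_coprime hcop2) h (g + h)
  obtain ⟨k, hR3, -, -⟩ := R_gcd h (g + h)
  have h6 : Reach ∅ (V 1 h 0 (g + h)) (V 1 k 0 0) :=
    (L13 hR3 1 0).mono (Set.empty_subset _)
  have h7 : Reach ∅ (V 1 k 0 0) (V 1 0 (-k) 0) := by
    have hstep := step_E12 hemp2 1 k 0 0 k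
    convert hstep using 2 <;> ring
  have h8 : Reach ∅ (V 1 0 (-k) 0) E0 := by
    have hstep := step_E2 hemp3 1 0 (-k) 0 k
    show Reach ∅ _ (V 1 0 0 0)
    convert hstep using 2 <;> ring
  exact h12'.trans (h3.trans (h5.trans (h6.trans (h7.trans h8))))

lemma phase1' (v u : vec) (hu : pair v u = 1) : Reach ∅ v E0 := by
  rw [vec_eq_V v] at hu ⊢
  exact phase1 u hu

lemma phase2 (p q s : ℤ) : Reach {E0} (V p q 1 s) E2 := by
  have hF0 : ∀ f ∈ ({E0} : Set vec), pair f E0 = 0 := by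
    intro f hf; rw [Set.mem_singleton_iff] at hf; subst hf
    rw [pair_E0_right]; simp [E0]
  have hF01 : ∀ f ∈ ({E0} : Set vec), pair f (V 1 1 0 0) = 0 := by
    intro f hf; rw [Set.mem_singleton_iff] at hf; subst hf
    rw [pair_E0_right]; simp
  have h1 : Reach {E0} (V p q 1 s) (V 0 q 1 s) := by
    have hstep := step_E0 hF0 p q 1 s (-p)
    convert hstep using 2 <;> ring
  obtain ⟨k, hR, -, -⟩ := R_gcd q s
  have h2 : Reach {E0} (V 0 q 1 s) (V 0 k 1 0) :=
    (L13 hR 0 1).mono (by intro f hf; exact Set.mem_insert_iff.mpr (Or.inl hf))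
  have h3 : Reach {E0} (V 0 k 1 0) (V (-k) 0 1 0) := by
    have hstep := step_E01 hF01 0 k 1 0 (-k)
    convert hstep using 2 <;> ring
  have h4 : Reach {E0} (V (-k) 0 1 0) E2 := by
    have hstep := step_E0 hF0 (-k) 0 1 0 k
    show Reach _ _ (V 0 0 1 0)
    convert hstep using 2 <;> ring
  exact h1.trans (h2.trans (h3.trans h4))

lemma phase2' (u : vec) (hc : u (Sum.inr 0) = 1) : Reach {E0} u E2 := by
  rw [vec_eq_V u, hc]
  exact phase2 _ _ _

lemma phase3a' (w : vec) (h0 : w (Sum.inl 0) = 0) (hc : w (Sum.inr 0) = 0)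
    (hcop : IsCoprime (w (Sum.inl 1)) (w (Sum.inr 1))) : Reach F02 w E1 := by
  have := L13 (R_coprime hcop) 0 0
  rw [vec_eq_V w, h0, hc]
  exact this

lemma phase3b' (w : vec) (h0 : w (Sum.inl 0) = 0) (hc : w (Sum.inr 0) = 0)
    (hd : w (Sum.inr 1) = 1) : Reach {E0, E2, E1} w E3 := by
  have hF : ∀ f ∈ ({E0, E2, E1} : Set vec), pair f E1 = 0 := by
    intro f hf
    rcases hf with rfl | hf
    · rw [pair_E0_right]; simp [E1]
    · rcases hf with rfl | hf
      · rw [pair_E2_right]; simp [E1]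
      · rw [Set.mem_singleton_iff] at hf; subst hf
        rw [pair_E1_right]; simp [E1]
  rw [vec_eq_V w, h0, hc, hd]
  have hstep := step_E1 hF 0 (w (Sum.inl 1)) 0 1 (-(w (Sum.inl 1)))
  show Reach _ _ (V 0 0 0 1)
  convert hstep using 2 <;> ring

lemma vec_decomp (x : vec) :
    x = x (Sum.inl 0) • E0 + x (Sum.inl 1) • E1 + x (Sum.inr 0) • E2 + x (Sum.inr 1) • E3 := by
  funext i; rcases i with i | i <;> fin_cases i <;> simp [E0, E1, E2, E3, V]

lemma eq_one_of_fixes {A : Mat} (h0 : A.mulVec E0 = E0) (h1 : A.mulVec E1 = E1)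
    (h2 : A.mulVec E2 = E2) (h3 : A.mulVec E3 = E3) : A = 1 := by
  apply mat_ext; intro x
  rw [Matrix.one_mulVec]
  conv_lhs => rw [vec_decomp x]
  rw [Matrix.mulVec_add, Matrix.mulVec_add, Matrix.mulVec_add, Matrix.mulVec_smul,
    Matrix.mulVec_smul, Matrix.mulVec_smul, Matrix.mulVec_smul, h0, h1, h2, h3]
  exact (vec_decomp x).symm

lemma coe_mul_sp (A B : SpG) : ((A * B : SpG) : Mat) = (A : Mat) * (B : Mat) := rfl

lemma pair_E0_E2 : pair E0 E2 = -1 := by rw [pair_E0_right]; simp [E2]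
lemma pair_E0_E1 : pair E0 E1 = 0 := by rw [pair_E0_right]; simp [E1]
lemma pair_E0_E3 : pair E0 E3 = 0 := by rw [pair_E0_right]; simp [E3]
lemma pair_E2_E1 : pair E2 E1 = 0 := by rw [pair_E2_right]; simp [E1]
lemma pair_E2_E3 : pair E2 E3 = 0 := by rw [pair_E2_right]; simp [E3]
lemma pair_E1_E3 : pair E1 E3 = -1 := by rw [pair_E1_right]; simp [E3]

theorem H_eq_top : H = ⊤ := by
  rw [eq_top_iff]
  rintro M -
  -- Phase 1 : send first column to E0
  have hu : pair ((M : Mat).mulVec E0) (-((M : Mat).mulVec E2)) = 1 := by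
    rw [pair_neg_right, pair_invariance M.2, pair_E0_E2]; ring
  obtain ⟨P1, hP1H, hP1v, -⟩ := phase1' _ _ hu
  set M1 : SpG := P1 * M with hM1def
  have hM1E0 : (M1 : Mat).mulVec E0 = E0 := by
    rw [hM1def, coe_mul_sp, ← mulVec_mulVec, hP1v]
  -- Phase 2 : send second column to E2 fixing E0
  have hu1c : ((M1 : Mat).mulVec E2) (Sum.inr 0) = 1 := by
    have hp : pair E0 ((M1 : Mat).mulVec E2) = -1 := by
      rw [← hM1E0, pair_invariance M1.2, pair_E0_E2]
    rw [pair_E0_right] at hp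
    linarith
  obtain ⟨P2, hP2H, hP2v, hP2f⟩ := phase2' _ hu1c
  set M2 : SpG := P2 * M1 with hM2def
  have hP2E0 : (P2 : Mat).mulVec E0 = E0 := hP2f E0 (Set.mem_singleton _)
  have hM2E0 : (M2 : Mat).mulVec E0 = E0 := by
    rw [hM2def, coe_mul_sp, ← mulVec_mulVec, hM1E0, hP2E0]
  have hM2E2 : (M2 : Mat).mulVec E2 = E2 := by
    rw [hM2def, coe_mul_sp, ← mulVec_mulVec, hP2v]
  -- Phase 3a : third basis vector
  have hw1 := (M : Mat) -- dummy
  have hw1a : ((M2 : Mat).mulVec E1) (Sum.inl 0) = 0 := by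
    have hp : pair E2 ((M2 : Mat).mulVec E1) = 0 := by
      rw [← hM2E2, pair_invariance M2.2, pair_E2_E1]
    rwa [pair_E2_right] at hp
  have hw1c : ((M2 : Mat).mulVec E1) (Sum.inr 0) = 0 := by
    have hp : pair E0 ((M2 : Mat).mulVec E1) = 0 := by
      rw [← hM2E0, pair_invariance M2.2, pair_E0_E1]
    rw [pair_E0_right] at hp
    linarith
  have hw1cop : IsCoprime (((M2 : Mat).mulVec E1) (Sum.inl 1))
      (((M2 : Mat).mulVec E1) (Sum.inr 1)) := by
    have hp : pair ((M2 : Mat).mulVec E1) ((M2 : Mat).mulVec E3) = -1 := by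
      rw [pair_invariance M2.2, pair_E1_E3]
    rw [pair_expand, hw1a, hw1c] at hp
    exact ⟨((M2 : Mat).mulVec E3) (Sum.inr 1), -(((M2 : Mat).mulVec E3) (Sum.inl 1)),
      by linear_combination -hp⟩
  obtain ⟨P3, hP3H, hP3v, hP3f⟩ := phase3a' _ hw1a hw1c hw1cop
  set M3 : SpG := P3 * M2 with hM3def
  have hP3E0 : (P3 : Mat).mulVec E0 = E0 := hP3f E0 (by left; rfl)
  have hP3E2 : (P3 : Mat).mulVec E2 = E2 := hP3f E2 (by right; rfl)
  have hM3E0 : (M3 : Mat).mulVec E0 = E0 := by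
    rw [hM3def, coe_mul_sp, ← mulVec_mulVec, hM2E0, hP3E0]
  have hM3E2 : (M3 : Mat).mulVec E2 = E2 := by
    rw [hM3def, coe_mul_sp, ← mulVec_mulVec, hM2E2, hP3E2]
  have hM3E1 : (M3 : Mat).mulVec E1 = E1 := by
    rw [hM3def, coe_mul_sp, ← mulVec_mulVec, hP3v]
  -- Phase 3b : last basis vector
  have hw2a : ((M3 : Mat).mulVec E3) (Sum.inl 0) = 0 := by
    have hp : pair E2 ((M3 : Mat).mulVec E3) = 0 := by
      rw [← hM3E2, pair_invariance M3.2, pair_E2_E3]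
    rwa [pair_E2_right] at hp
  have hw2c : ((M3 : Mat).mulVec E3) (Sum.inr 0) = 0 := by
    have hp : pair E0 ((M3 : Mat).mulVec E3) = 0 := by
      rw [← hM3E0, pair_invariance M3.2, pair_E0_E3]
    rw [pair_E0_right] at hp
    linarith
  have hw2d : ((M3 : Mat).mulVec E3) (Sum.inr 1) = 1 := by
    have hp : pair E1 ((M3 : Mat).mulVec E3) = -1 := by
      rw [← hM3E1, pair_invariance M3.2, pair_E1_E3]
    rw [pair_E1_right] at hp
    linarith
  obtain ⟨P4, hP4H, hP4v, hP4f⟩ := phase3b' _ hw2a hw2c hw2d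
  set M4 : SpG := P4 * M3 with hM4def
  have hP4E0 : (P4 : Mat).mulVec E0 = E0 := hP4f E0 (by left; rfl)
  have hP4E2 : (P4 : Mat).mulVec E2 = E2 := hP4f E2 (by right; left; rfl)
  have hP4E1 : (P4 : Mat).mulVec E1 = E1 := hP4f E1 (by right; right; rfl)
  have hM4E0 : (M4 : Mat).mulVec E0 = E0 := by
    rw [hM4def, coe_mul_sp, ← mulVec_mulVec, hM3E0, hP4E0]
  have hM4E2 : (M4 : Mat).mulVec E2 = E2 := by
    rw [hM4def, coe_mul_sp, ← mulVec_mulVec, hM3E2, hP4E2]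
  have hM4E1 : (M4 : Mat).mulVec E1 = E1 := by
    rw [hM4def, coe_mul_sp, ← mulVec_mulVec, hM3E1, hP4E1]
  have hM4E3 : (M4 : Mat).mulVec E3 = E3 := by
    rw [hM4def, coe_mul_sp, ← mulVec_mulVec, hP4v]
  have hM4 : M4 = 1 := by
    apply Subtype.coe_injective
    exact eq_one_of_fixes hM4E0 hM4E1 hM4E2 hM4E3
  have hprod : (P4 * P3 * P2 * P1) * M = 1 := by
    have : P4 * (P3 * (P2 * (P1 * M))) = 1 := by
      rw [← hM1def, ← hM2def, ← hM3def, ← hM4def]; exact hM4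
    rw [← this]; group
  have hM : M = (P4 * P3 * P2 * P1)⁻¹ := by
    rw [← one_mul M, ← inv_mul_cancel (P4 * P3 * P2 * P1), mul_assoc, hprod, mul_one]
  rw [hM]
  exact inv_mem (mul_mem (mul_mem (mul_mem hP4H hP3H) hP2H) hP1H)
-- ## transvections as group elements
lemma T_vzero (lam : ℤ) : T (0 : vec) lam = 1 := by
  ext i j; simp [T_apply, Matrix.one_apply]

lemma Tsp_mul (v : vec) (lam mu : ℤ) : Tsp v lam * Tsp v mu = Tsp v (lam + mu) :=
  Subtype.ext (T_add v lam mu)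

lemma Tsp_zero (v : vec) : Tsp v 0 = 1 := Subtype.ext (T_zero v)

lemma Tsp_natCast (v : vec) (n : ℕ) : Tsp v (n : ℤ) = (Tsp v 1) ^ n := by
  induction n with
  | zero => simpa using Tsp_zero v
  | succ n ih =>
    rw [pow_succ, ← ih, Tsp_mul]
    norm_num

lemma Tsp_zpow (v : vec) (lam : ℤ) : Tsp v lam = (Tsp v 1) ^ lam := by
  obtain ⟨n, rfl | rfl⟩ := Int.eq_nat_or_neg lam
  · rw [Tsp_natCast, zpow_natCast]
  · have hinv : Tsp v (-(n : ℤ)) * Tsp v (n : ℤ) = 1 := by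
      rw [Tsp_mul]; simpa using Tsp_zero v
    rw [eq_inv_of_mul_eq_one_left hinv, Tsp_natCast, ← zpow_natCast, ← _root_.zpow_neg]

lemma Tsp_conj (P : SpG) (v : vec) (lam : ℤ) :
    P * Tsp v lam * P⁻¹ = Tsp ((P : Mat).mulVec v) lam := by
  have h : P * Tsp v lam = Tsp ((P : Mat).mulVec v) lam * P :=
    Subtype.ext (by rw [coe_mul_sp, coe_mul_sp]; exact T_conj P.2 v lam)
  rw [h, mul_inv_cancel_right]

lemma Tsp_smul (v : vec) (m lam : ℤ) : Tsp (m • v) lam = Tsp v (m * m * lam) :=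
  Subtype.ext (T_smul v m lam)

lemma V_zero : V 0 0 0 0 = (0 : vec) := by
  funext i; rcases i with i | i <;> fin_cases i <;> rfl

-- ## primitive decomposition
lemma exists_primitive (v : vec) (hv : v ≠ 0) :
    ∃ (m : ℤ) (v0 u : vec), m ≠ 0 ∧ v = m • v0 ∧ pair v0 u = 1 := by
  set a := v (Sum.inl 0) with ha'
  set b := v (Sum.inl 1) with hb'
  set c := v (Sum.inr 0) with hc'
  set d := v (Sum.inr 1) with hd'
  set g1 : ℕ := Int.gcd a b with hg1
  set g2 : ℕ := Int.gcd (g1 : ℤ) c with hg2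
  set n : ℕ := Int.gcd (g2 : ℤ) d with hn
  have hm0 : (n : ℤ) ≠ 0 := by
    intro h0
    apply hv
    have hz : n = 0 := by exact_mod_cast h0
    obtain ⟨hg2z', h4⟩ := Int.gcd_eq_zero_iff.mp hz
    have hg2z : g2 = 0 := by exact_mod_cast hg2z'
    obtain ⟨hg1z', h3⟩ := Int.gcd_eq_zero_iff.mp hg2z
    have hg1z : g1 = 0 := by exact_mod_cast hg1z'
    obtain ⟨h1, h2⟩ := Int.gcd_eq_zero_iff.mp hg1z
    rw [vec_eq_V v, ← ha', ← hb', ← hc', ← hd', h1, h2, h3, h4, V_zero]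
  -- divisibility
  have hdg2 : ((n : ℤ)) ∣ (g2 : ℤ) := Int.gcd_dvd_left _ _
  have hdd : ((n : ℤ)) ∣ d := Int.gcd_dvd_right _ _
  have hdg1 : ((g2 : ℤ)) ∣ (g1 : ℤ) := Int.gcd_dvd_left _ _
  have hdc : ((g2 : ℤ)) ∣ c := Int.gcd_dvd_right _ _
  have hda : ((n : ℤ)) ∣ a := (hdg2.trans hdg1).trans (Int.gcd_dvd_left _ _)
  have hdb : ((n : ℤ)) ∣ b := (hdg2.trans hdg1).trans (Int.gcd_dvd_right _ _)
  have hdcn : ((n : ℤ)) ∣ c := hdg2.trans hdc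
  -- Bezout
  have e3 : ((n : ℤ)) = (g2 : ℤ) * Int.gcdA (g2 : ℤ) d + d * Int.gcdB (g2 : ℤ) d :=
    Int.gcd_eq_gcd_ab _ _
  have e2 : ((g2 : ℤ)) = (g1 : ℤ) * Int.gcdA (g1 : ℤ) c + c * Int.gcdB (g1 : ℤ) c :=
    Int.gcd_eq_gcd_ab _ _
  have e1 : ((g1 : ℤ)) = a * Int.gcdA a b + b * Int.gcdB a b := Int.gcd_eq_gcd_ab _ _
  set x1 := Int.gcdA a b with hx1
  set y1 := Int.gcdB a b with hy1
  set x2 := Int.gcdA (g1 : ℤ) c with hx2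
  set y2 := Int.gcdB (g1 : ℤ) c with hy2
  set x3 := Int.gcdA (g2 : ℤ) d with hx3
  set y3 := Int.gcdB (g2 : ℤ) d with hy3
  set α := x1 * x2 * x3 with hα
  set β := y1 * x2 * x3 with hβ
  set γ := y2 * x3 with hγ
  set δ := y3 with hδ
  have combo : ((n : ℤ)) = a * α + b * β + c * γ + d * δ := by
    rw [hα, hβ, hγ, hδ]
    linear_combination e3 + x3 * e2 + (x2 * x3) * e1
  refine ⟨(n : ℤ), fun i => v i / (n : ℤ), V γ δ (-α) (-β), hm0, ?_, ?_⟩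
  · funext i
    have hdi : ((n : ℤ)) ∣ v i := by
      rcases i with i | i <;> fin_cases i
      · exact hda
      · exact hdb
      · exact hdcn
      · exact hdd
    simp only [Pi.smul_apply, smul_eq_mul]
    exact (Int.mul_ediv_cancel' hdi).symm
  · rw [pair_expand]
    simp only [V_inl0, V_inl1, V_inr0, V_inr1]
    rw [← ha', ← hb', ← hc', ← hd']
    apply mul_left_cancel₀ hm0
    rw [mul_one]
    have m1 : (n : ℤ) * (a / (n : ℤ)) = a := Int.mul_ediv_cancel' hda
    have m2 : (n : ℤ) * (b / (n : ℤ)) = b := Int.mul_ediv_cancel' hdb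
    have m3 : (n : ℤ) * (c / (n : ℤ)) = c := Int.mul_ediv_cancel' hdcn
    have m4 : (n : ℤ) * (d / (n : ℤ)) = d := Int.mul_ediv_cancel' hdd
    linear_combination (-1 : ℤ) * combo + α * m1 + β * m2 + γ * m3 + δ * m4

-- ## the abelian-quotient bound
lemma comm_image {A : Type*} [CommGroup A] (χ : SpG →* A) (hs : Function.Surjective χ)
    {n : ℕ} (hA : Nat.card A ∣ 2 ^ n) : Nat.card A ≤ 2 := by
  set y := χ (Tsp E0 1) with hy
  have hprim : ∀ (v0 u : vec), pair v0 u = 1 → ∀ mu : ℤ, χ (Tsp v0 mu) = y ^ mu := by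
    intro v0 u hu mu
    obtain ⟨P, -, hPv, -⟩ := phase1' v0 u hu
    have hconj := Tsp_conj P v0 mu
    rw [hPv] at hconj
    have hc := congrArg χ hconj
    rw [_root_.map_mul, _root_.map_mul, _root_.map_inv] at hc
    have : χ (Tsp v0 mu) = χ (Tsp E0 mu) := by
      rw [← hc, mul_comm (χ P) (χ (Tsp v0 mu)), mul_assoc, mul_inv_cancel, mul_one]
    rw [this, Tsp_zpow E0 mu, _root_.map_zpow, ← hy]
  have hkey : ∀ (v : vec) (lam : ℤ), χ (Tsp v lam) ∈ Subgroup.zpowers y := by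
    intro v lam
    by_cases hv : v = 0
    · subst hv
      rw [show Tsp 0 lam = 1 from Subtype.ext (T_vzero lam), _root_.map_one]
      exact one_mem _
    · obtain ⟨m, v0, u, hm, hveq, hu⟩ := exists_primitive v hv
      rw [hveq, Tsp_smul, hprim v0 u hu]
      exact ⟨m * m * lam, rfl⟩
  have htop : Subgroup.zpowers y = ⊤ := by
    rw [eq_top_iff, ← MonoidHom.range_eq_top.mpr hs, MonoidHom.range_eq_map, ← H_eq_top, H,
      MonoidHom.map_closure]
    apply (Subgroup.closure_le _).mpr
    rintro x ⟨s, ⟨v, lam, rfl⟩, rfl⟩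
    exact hkey v lam
  have hcard : Nat.card A = orderOf y := by
    rw [← Nat.card_zpowers, htop, Subgroup.card_top]
  -- the 30-transvection relation
  have hword : (Tsp E0 1 * Tsp E2 1 * Tsp (V 1 1 0 0) 1 * Tsp E3 1 * Tsp E1 1) ^ 6 = (1 : SpG) := by
    apply Subtype.ext
    rw [SubmonoidClass.coe_pow]
    show ((T E0 1 * T E2 1 * T (V 1 1 0 0) 1 * T E3 1 * T E1 1) ^ 6 : Mat) = 1
    show ((T (V 1 0 0 0) 1 * T (V 0 0 1 0) 1 * T (V 1 1 0 0) 1 * T (V 0 0 0 1) 1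
      * T (V 0 1 0 0) 1) ^ 6 : Mat) = 1
    decide
  have hp1 : χ (Tsp E0 1) = y ^ (1 : ℤ) :=
    hprim E0 (-E2) (by rw [pair_neg_right, pair_E0_E2]; ring) 1
  have hp2 : χ (Tsp E2 1) = y ^ (1 : ℤ) :=
    hprim E2 E0 (by rw [pair_E2_right]; rfl) 1
  have hp3 : χ (Tsp (V 1 1 0 0) 1) = y ^ (1 : ℤ) :=
    hprim (V 1 1 0 0) (V 0 0 (-1) 0) (by rw [pair_V]; ring) 1
  have hp4 : χ (Tsp E3 1) = y ^ (1 : ℤ) :=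
    hprim E3 E1 (by rw [pair_E3_right]; rfl) 1
  have hp5 : χ (Tsp E1 1) = y ^ (1 : ℤ) :=
    hprim E1 (-E3) (by rw [pair_neg_right, pair_E1_E3]; ring) 1
  have h30 : y ^ (30 : ℕ) = 1 := by
    have hc := congrArg χ hword
    rw [_root_.map_pow, _root_.map_mul, _root_.map_mul, _root_.map_mul, _root_.map_mul, hp1, hp2, hp3, hp4, hp5, _root_.map_one] at hc
    simp only [zpow_one] at hc
    have h55 : y * y * y * y * y = y ^ 5 := by
      rw [pow_succ, pow_succ, pow_succ, pow_succ, pow_one]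
    rw [h55, ← pow_mul] at hc
    norm_num at hc
    exact hc
  have hdvd30 : orderOf y ∣ 30 := orderOf_dvd_of_pow_eq_one h30
  have hdvd2n : orderOf y ∣ 2 ^ n := hcard ▸ hA
  obtain ⟨j, -, hje⟩ := (Nat.dvd_prime_pow Nat.prime_two).mp hdvd2n
  have hord2 : orderOf y ∣ 2 := by
    rw [hje] at hdvd30 ⊢
    have hj1 : j ≤ 1 := by
      by_contra hj2
      have h4 : (4 : ℕ) ∣ 2 ^ j :=
        (show (4 : ℕ) = 2 ^ 2 by norm_num) ▸ pow_dvd_pow 2 (by omega)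
      exact absurd (h4.trans hdvd30) (by norm_num)
    calc (2 : ℕ) ^ j ∣ 2 ^ 1 := pow_dvd_pow 2 hj1
    _ = 2 := by norm_num
  rw [hcard]
  exact Nat.le_of_dvd (by norm_num) hord2

-- ## finite 2-groups whose abelian quotients are small, are small
universe u

lemma two_group_le (n : ℕ) : ∀ (R : Type u) [Group R] [Finite R], Nat.card R = n →
    (∃ k, n = 2 ^ k) →
    (∀ (A : Type u) [CommGroup A] (ψ : R →* A), Function.Surjective ψ → Nat.card A ≤ 2) →
    Nat.card R ≤ 2 := by
  induction n using Nat.strong_induction_on with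
  | _ n ih =>
    intro R _ _ hcard hpow hcomm
    by_cases hle : Nat.card R ≤ 2
    · exact hle
    push_neg at hle
    obtain ⟨k, hk⟩ := hpow
    have hnontriv : Nontrivial R := (Finite.one_lt_card_iff_nontrivial).mp (by omega)
    have hP : IsPGroup 2 R := IsPGroup.of_card (by rw [hcard, hk])
    have hZ : Nontrivial (Subgroup.center R) := hP.center_nontrivial
    have hcardeq : Nat.card R =
        Nat.card (R ⧸ Subgroup.center R) * Nat.card (Subgroup.center R) :=
      Subgroup.card_eq_card_quotient_mul_card_subgroup (Subgroup.center R)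
    have h2 : 2 ≤ Nat.card (Subgroup.center R) :=
      Finite.one_lt_card_iff_nontrivial.mpr hZ
    have hqpos : 0 < Nat.card (R ⧸ Subgroup.center R) := Nat.card_pos
    have hnpos : 0 < n := by omega
    have hlt : Nat.card (R ⧸ Subgroup.center R) < n := by
      rw [hcard] at hcardeq; nlinarith
    have hdvd : Nat.card (R ⧸ Subgroup.center R) ∣ 2 ^ k := by
      rw [← hk, ← hcard]
      exact Dvd.intro _ hcardeq.symm
    obtain ⟨j, -, hje⟩ := (Nat.dvd_prime_pow Nat.prime_two).mp hdvd
    have hqle : Nat.card (R ⧸ Subgroup.center R) ≤ 2 := by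
      apply ih _ hlt (R ⧸ Subgroup.center R) rfl ⟨j, hje⟩
      intro A _ ψ hsurj
      exact hcomm A (ψ.comp (QuotientGroup.mk' (Subgroup.center R)))
        (hsurj.comp (QuotientGroup.mk'_surjective _))
    have hcyc : IsCyclic (R ⧸ Subgroup.center R) := by
      rcases (by omega : Nat.card (R ⧸ Subgroup.center R) = 1 ∨
          Nat.card (R ⧸ Subgroup.center R) = 2) with hq | hq
      · have : Subsingleton (R ⧸ Subgroup.center R) := (Nat.card_eq_one_iff_unique.mp hq).1
        exact isCyclic_of_subsingleton
      · haveI : Fact (Nat.Prime 2) := ⟨Nat.prime_two⟩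
        exact isCyclic_of_prime_card hq
    have hcm : ∀ a b : R, a * b = b * a := by
      apply commutative_of_cyclic_center_quotient (QuotientGroup.mk' (Subgroup.center R))
      rw [QuotientGroup.ker_mk']
    letI : CommGroup R := { (inferInstance : Group R) with mul_comm := hcm }
    have := hcomm R (MonoidHom.id R) Function.surjective_id
    omega
-- ## main bound
theorem main_card_le {Q : Type*} [Group Q] [Finite Q] (k : ℕ) (hk : Nat.card Q = 2 ^ k)
    (φ : SpG →* Q) : Nat.card φ.range ≤ 2 := by
  have hdvd : Nat.card φ.range ∣ 2 ^ k := hk ▸ Subgroup.card_subgroup_dvd_card φ.range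
  obtain ⟨k', -, hk'⟩ := (Nat.dvd_prime_pow Nat.prime_two).mp hdvd
  apply two_group_le (Nat.card φ.range) φ.range rfl ⟨k', hk'⟩
  intro A _ ψ hsurj
  have hχ : Function.Surjective (ψ.comp φ.rangeRestrict) :=
    hsurj.comp φ.rangeRestrict_surjective
  apply comm_image (ψ.comp φ.rangeRestrict) hχ (n := k')
  calc Nat.card A ∣ Nat.card φ.range := Subgroup.card_dvd_of_surjective ψ hsurj
  _ = 2 ^ k' := hk'

end Sp4Aux

/-- Every homomorphism from `Sp(4,ℤ)` to a finite group of 2-power order has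
image of cardinality at most 2; in particular, the only nontrivial finite
2-group onto which `Sp(4,ℤ)` surjects is `ℤ/2ℤ`. -/
theorem sp4Z_to_two_group (Q : Type*) [Group Q] [Finite Q]
    (hQ : ∃ k : ℕ, Nat.card Q = 2 ^ k) :
    (∀ φ : Matrix.symplecticGroup (Fin 2) ℤ →* Q, Nat.card φ.range ≤ 2) ∧
    (∀ φ : Matrix.symplecticGroup (Fin 2) ℤ →* Q, Function.Surjective φ →
      Nontrivial Q → Nonempty (Q ≃* Multiplicative (ZMod 2))) := by
  obtain ⟨k, hk⟩ := hQ
  have hle : ∀ φ : Matrix.symplecticGroup (Fin 2) ℤ →* Q, Nat.card φ.range ≤ 2 :=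
    fun φ => Sp4Aux.main_card_le k hk φ
  refine ⟨hle, ?_⟩
  intro φ hsurj hnt
  have hr : φ.range = ⊤ := MonoidHom.range_eq_top.mpr hsurj
  have hcardQ : Nat.card Q ≤ 2 := by
    have h := hle φ
    rwa [hr, Subgroup.card_top] at h
  have h2 : Nat.card Q = 2 := by
    have h1 : 1 < Nat.card Q := Finite.one_lt_card_iff_nontrivial.mpr hnt
    omega
  haveI : Fact (Nat.Prime 2) := ⟨Nat.prime_two⟩
  have hz : Nat.card (Multiplicative (ZMod 2)) = 2 :=
    (Nat.card_congr Multiplicative.toAdd).trans (Nat.card_zmod 2)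
  exact ⟨mulEquivOfPrimeCardEq h2 hz⟩
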